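/- (AWBGA Error Reduction Lemma) Let X be a uniformly smooth Banach space with modulus of smoothness ρ. Let f, f^ε ∈ X with ‖f − f^ε‖ ≤ ε and f^ε/A ∈ A_1(D), A ≥ ε. Suppose f = f_m + G_m with f_m ≠ 0, and F_m ∈ X' satisfies ‖F_m‖ ≤ 1, F_m(f_m) ≥ (1−δ_m)‖f_m‖, |F_m(G_m)| ≤ ε_m, and φ_{m+1} ∈ D satisfies F_m(φ_{m+1}) ≥ t_{m+1} sup_{g∈D} F_m(g), and ‖f_{m+1}‖ ≤ (1+η_{m+1}) inf_{λ≥0}‖f_m − λφ_{m+1}‖. Then for every λ ≥ 0: ‖f_{m+1}‖ ≤ ‖f_m‖(1+η_{m+1})(1 + δ_m + 2ρ(λ/‖f_m‖) − λ t_{m+1} A^{−1}(1 − δ_m − (ε_m + ε)/‖f_m‖)). -/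
import Mathlib


/-- The modulus of smoothness of a real normed space. -/
noncomputable def modulusOfSmoothness (X : Type*) [NormedAddCommGroup X] [NormedSpace ℝ X]
    (u : ℝ) : ℝ :=
  sSup { r : ℝ | ∃ x y : X, ‖x‖ = 1 ∧ ‖y‖ = 1 ∧ r = (‖x + u • y‖ + ‖x - u • y‖) / 2 - 1 }

/-- `X` is uniformly smooth: `ρ(u)/u → 0` as `u → 0⁺`. -/
def UniformlySmooth (X : Type*) [NormedAddCommGroup X] [NormedSpace ℝ X] : Prop :=
  Filter.Tendsto (fun u : ℝ => modulusOfSmoothness X u / u)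
    (nhdsWithin 0 (Set.Ioi 0)) (nhds 0)

lemma mos_bddAbove (X : Type*) [NormedAddCommGroup X] [NormedSpace ℝ X] (u : ℝ) :
    BddAbove { r : ℝ | ∃ x y : X, ‖x‖ = 1 ∧ ‖y‖ = 1 ∧
      r = (‖x + u • y‖ + ‖x - u • y‖) / 2 - 1 } := by
  refine ⟨|u|, ?_⟩
  rintro r ⟨x, y, hx, hy, rfl⟩
  have h1 : ‖x + u • y‖ ≤ 1 + |u| := by
    calc ‖x + u • y‖ ≤ ‖x‖ + ‖u • y‖ := norm_add_le _ _
      _ = 1 + |u| := by rw [hx, norm_smul, hy, Real.norm_eq_abs, mul_one]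
  have h2 : ‖x - u • y‖ ≤ 1 + |u| := by
    calc ‖x - u • y‖ ≤ ‖x‖ + ‖u • y‖ := norm_sub_le _ _
      _ = 1 + |u| := by rw [hx, norm_smul, hy, Real.norm_eq_abs, mul_one]
  linarith

lemma mos_le {X : Type*} [NormedAddCommGroup X] [NormedSpace ℝ X] {x y : X}
    (hx : ‖x‖ = 1) (hy : ‖y‖ = 1) (u : ℝ) :
    (‖x + u • y‖ + ‖x - u • y‖) / 2 - 1 ≤ modulusOfSmoothness X u :=
  le_csSup (mos_bddAbove X u) ⟨x, y, hx, hy, rfl⟩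

lemma mos_nonneg {X : Type*} [NormedAddCommGroup X] [NormedSpace ℝ X] {x : X}
    (hx : ‖x‖ = 1) {u : ℝ} (hu : 0 ≤ u) : 0 ≤ modulusOfSmoothness X u := by
  have h := mos_le hx hx u
  have h1 : ‖x + u • x‖ = 1 + u := by
    have hxx : x + u • x = (1 + u) • x := by module
    rw [hxx, norm_smul, hx, Real.norm_eq_abs, abs_of_nonneg (by linarith), mul_one]
  have h2 : (1:ℝ) - u ≤ ‖x - u • x‖ := by
    have hxx : x - u • x = (1 - u) • x := by module
    rw [hxx, norm_smul, hx, Real.norm_eq_abs, mul_one]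
    exact le_abs_self _
  rw [h1] at h
  linarith

set_option maxHeartbeats 1600000 in
/-- AWBGA Error Reduction Lemma. -/
theorem stmt_13 {X : Type*} [NormedAddCommGroup X] [NormedSpace ℝ X] [CompleteSpace X]
    (hsm : UniformlySmooth X)
    (D : Set X) (hsymm : ∀ g ∈ D, -g ∈ D) (hnorm : ∀ g ∈ D, ‖g‖ ≤ 1)
    (hdense : (Submodule.span ℝ D).topologicalClosure = ⊤)
    (ε A : ℝ) (hε : 0 ≤ ε) (hA : ε ≤ A) (hA0 : 0 < A)
    (f fε : X) (hfε : ‖f - fε‖ ≤ ε) (hfA : A⁻¹ • fε ∈ closure (convexHull ℝ D))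
    (fm Gm : X) (hsum : f = fm + Gm) (hfm : fm ≠ 0)
    (δ η εm t : ℝ) (hδ : δ ∈ Set.Icc (0:ℝ) 1) (hη : η ∈ Set.Icc (0:ℝ) 1)
    (hεm : 0 ≤ εm) (ht : t ∈ Set.Ioc (0:ℝ) 1)
    (F : X →L[ℝ] ℝ) (hF1 : ‖F‖ ≤ 1) (hFfm : F fm ≥ (1 - δ) * ‖fm‖)
    (hbo : |F Gm| ≤ εm)
    (φ : X) (hφD : φ ∈ D) (hgreedy : F φ ≥ t * sSup (F '' D))
    (fnext : X)
    (hred : ‖fnext‖ ≤ (1 + η) * ⨅ l : {x : ℝ // 0 ≤ x}, ‖fm - (l : ℝ) • φ‖) :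
    ∀ l : ℝ, 0 ≤ l →
      ‖fnext‖ ≤ ‖fm‖ * (1 + η) *
        (1 + δ + 2 * modulusOfSmoothness X (l / ‖fm‖)
          - l * t * A⁻¹ * (1 - δ - (εm + ε) / ‖fm‖)) := by
  intro l hl
  have hN : (0:ℝ) < ‖fm‖ := norm_pos_iff.mpr hfm
  obtain ⟨N, hNdef⟩ : ∃ N : ℝ, N = ‖fm‖ := ⟨_, rfl⟩
  obtain ⟨u, hudef⟩ : ∃ u : ℝ, u = l / N := ⟨_, rfl⟩
  rw [← hNdef] at hN hFfm ⊢
  rw [← hudef]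
  have hNne : N ≠ 0 := hN.ne'
  have hu : 0 ≤ u := by rw [hudef]; exact div_nonneg hl hN.le
  obtain ⟨ρ, hρdef⟩ : ∃ ρ : ℝ, ρ = modulusOfSmoothness X u := ⟨_, rfl⟩
  rw [← hρdef]
  obtain ⟨x, hxdef⟩ : ∃ x : X, x = N⁻¹ • fm := ⟨_, rfl⟩
  have hx1 : ‖x‖ = 1 := by
    rw [hxdef, norm_smul, Real.norm_eq_abs, abs_of_pos (inv_pos.mpr hN), ← hNdef]
    field_simp
  have hNx : N • x = fm := by
    rw [hxdef, smul_smul, mul_inv_cancel₀ hNne, one_smul]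
  have hρ0 : 0 ≤ ρ := hρdef ▸ mos_nonneg hx1 hu
  have hNu : N * u = l := by rw [hudef]; field_simp
  -- sum bound
  have hsumb : ‖fm + l • φ‖ + ‖fm - l • φ‖ ≤ 2 * N * (1 + ρ) := by
    by_cases hφ0 : φ = 0
    · rw [hφ0, smul_zero, add_zero, sub_zero, ← hNdef]
      nlinarith
    · obtain ⟨s, hsdef⟩ : ∃ s : ℝ, s = ‖φ‖ := ⟨_, rfl⟩
      have hs0 : 0 < s := hsdef ▸ norm_pos_iff.mpr hφ0
      have hs1 : s ≤ 1 := hsdef ▸ hnorm φ hφD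
      obtain ⟨y, hydef⟩ : ∃ y : X, y = s⁻¹ • φ := ⟨_, rfl⟩
      have hy1 : ‖y‖ = 1 := by
        rw [hydef, norm_smul, Real.norm_eq_abs, abs_of_pos (inv_pos.mpr hs0), ← hsdef]
        field_simp
      have hsy : s • y = φ := by
        rw [hydef, smul_smul, mul_inv_cancel₀ hs0.ne', one_smul]
      have hplus : fm + l • φ = N • (x + u • (s • y)) := by
        rw [hsy, smul_add, hNx, smul_smul, hNu]
      have hminus : fm - l • φ = N • (x - u • (s • y)) := by
        rw [hsy, smul_sub, hNx, smul_smul, hNu]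
      have hcv1 : ‖x + u • (s • y)‖ ≤ (1 - s) + s * ‖x + u • y‖ := by
        have hid : x + u • (s • y) = (1 - s) • x + s • (x + u • y) := by module
        calc ‖x + u • (s • y)‖ = ‖(1 - s) • x + s • (x + u • y)‖ := by rw [hid]
          _ ≤ ‖(1 - s) • x‖ + ‖s • (x + u • y)‖ := norm_add_le _ _
          _ = (1 - s) + s * ‖x + u • y‖ := by
              rw [norm_smul ((1:ℝ) - s) x, norm_smul s (x + u • y), hx1,
                Real.norm_eq_abs, Real.norm_eq_abs,
                abs_of_nonneg (by linarith : (0:ℝ) ≤ 1 - s), abs_of_pos hs0, mul_one]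
      have hcv2 : ‖x - u • (s • y)‖ ≤ (1 - s) + s * ‖x - u • y‖ := by
        have hid : x - u • (s • y) = (1 - s) • x + s • (x - u • y) := by module
        calc ‖x - u • (s • y)‖ = ‖(1 - s) • x + s • (x - u • y)‖ := by rw [hid]
          _ ≤ ‖(1 - s) • x‖ + ‖s • (x - u • y)‖ := norm_add_le _ _
          _ = (1 - s) + s * ‖x - u • y‖ := by
              rw [norm_smul ((1:ℝ) - s) x, norm_smul s (x - u • y), hx1,
                Real.norm_eq_abs, Real.norm_eq_abs,
                abs_of_nonneg (by linarith : (0:ℝ) ≤ 1 - s), abs_of_pos hs0, mul_one]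
      have hr1 : (‖x + u • y‖ + ‖x - u • y‖) / 2 - 1 ≤ ρ := hρdef ▸ mos_le hx1 hy1 u
      obtain ⟨r1, hr1def⟩ : ∃ r1 : ℝ, r1 = (‖x + u • y‖ + ‖x - u • y‖) / 2 - 1 := ⟨_, rfl⟩
      rw [← hr1def] at hr1
      have hsr : s * r1 ≤ ρ := by
        rcases le_total 0 r1 with h | h
        · nlinarith
        · nlinarith
      have hAB : ‖x + u • (s • y)‖ + ‖x - u • (s • y)‖ ≤ 2 + 2 * (s * r1) := by
        rw [hr1def]
        linarith
      have h1 : ‖fm + l • φ‖ = N * ‖x + u • (s • y)‖ := by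
        rw [hplus, norm_smul, Real.norm_eq_abs, abs_of_pos hN]
      have h2 : ‖fm - l • φ‖ = N * ‖x - u • (s • y)‖ := by
        rw [hminus, norm_smul, Real.norm_eq_abs, abs_of_pos hN]
      rw [h1, h2]
      have hab2 : ‖x + u • (s • y)‖ + ‖x - u • (s • y)‖ ≤ 2 + 2 * ρ := by linarith
      nlinarith [mul_le_mul_of_nonneg_left hab2 hN.le]
  -- bound on F
  have hFg : ∀ z : X, F z ≤ ‖z‖ := by
    intro z
    calc F z ≤ |F z| := le_abs_self _
      _ ≤ ‖F‖ * ‖z‖ := F.le_opNorm z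
      _ ≤ 1 * ‖z‖ := mul_le_mul_of_nonneg_right hF1 (norm_nonneg z)
      _ = ‖z‖ := one_mul _
  have hbddS : BddAbove (F '' D) := by
    refine ⟨1, ?_⟩
    rintro r ⟨g, hg, rfl⟩
    exact le_trans (hFg g) (hnorm g hg)
  have hS : A⁻¹ * F fε ≤ sSup (F '' D) := by
    have hconv : Convex ℝ {z : X | F z ≤ sSup (F '' D)} := by
      intro z hz w hw a b ha hb hab
      simp only [Set.mem_setOf_eq] at *
      rw [map_add, map_smul, map_smul, smul_eq_mul, smul_eq_mul]
      have hb' : b = 1 - a := by linarith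
      rw [hb']
      nlinarith [mul_le_mul_of_nonneg_left hz ha,
        mul_le_mul_of_nonneg_left hw (by linarith : (0:ℝ) ≤ 1 - a)]
    have hsub : closure (convexHull ℝ D) ⊆ {z : X | F z ≤ sSup (F '' D)} := by
      apply closure_minimal
      · exact convexHull_min (fun g hg => le_csSup hbddS ⟨g, hg, rfl⟩) hconv
      · exact isClosed_le F.continuous continuous_const
    have := hsub hfA
    simpa [map_smul, smul_eq_mul] using this
  have hFfε : F f - ε ≤ F fε := by
    have h1 : F f - F fε = F (f - fε) := by rw [map_sub]
    have h2 : F (f - fε) ≤ ‖f - fε‖ := hFg _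
    linarith
  have hFf : (1 - δ) * N - εm ≤ F f := by
    have h1 : F f = F fm + F Gm := by rw [hsum, map_add]
    have h2 : -εm ≤ F Gm := neg_le_of_abs_le hbo
    linarith
  have hFφ : t * (A⁻¹ * ((1 - δ) * N - εm - ε)) ≤ F φ := by
    have h1 : A⁻¹ * ((1 - δ) * N - εm - ε) ≤ A⁻¹ * F fε := by
      apply mul_le_mul_of_nonneg_left _ (inv_pos.mpr hA0).le
      linarith
    have h2 : t * (A⁻¹ * ((1 - δ) * N - εm - ε)) ≤ t * sSup (F '' D) := by
      apply mul_le_mul_of_nonneg_left _ ht.1.le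
      linarith
    linarith
  -- key norm bound
  have hkey : ‖fm - l • φ‖ ≤
      N * (1 + δ + 2 * ρ) - l * (t * (A⁻¹ * ((1 - δ) * N - εm - ε))) := by
    have h1 : F (fm + l • φ) ≤ ‖fm + l • φ‖ := hFg _
    have h2 : F (fm + l • φ) = F fm + l * F φ := by rw [map_add, map_smul, smul_eq_mul]
    have h3 := mul_le_mul_of_nonneg_left hFφ hl
    nlinarith
  -- from infimum
  have hinf : (⨅ l : {x : ℝ // 0 ≤ x}, ‖fm - (l : ℝ) • φ‖) ≤ ‖fm - l • φ‖ := by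
    have hbb : BddBelow (Set.range fun i : {x : ℝ // 0 ≤ x} => ‖fm - (i : ℝ) • φ‖) :=
      ⟨0, by rintro r ⟨i, rfl⟩; exact norm_nonneg _⟩
    exact ciInf_le hbb (⟨l, hl⟩ : {x : ℝ // 0 ≤ x})
  have hη0 : (0:ℝ) ≤ 1 + η := by linarith [hη.1]
  have hnext : ‖fnext‖ ≤ (1 + η) * ‖fm - l • φ‖ :=
    le_trans hred (mul_le_mul_of_nonneg_left hinf hη0)
  have hexp : N * (1 + δ + 2 * ρ - l * t * A⁻¹ * (1 - δ - (εm + ε) / N)) =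
      N * (1 + δ + 2 * ρ) - l * (t * (A⁻¹ * ((1 - δ) * N - εm - ε))) := by
    field_simp
    ring
  have hfin : ‖fm - l • φ‖ ≤ N * (1 + δ + 2 * ρ - l * t * A⁻¹ * (1 - δ - (εm + ε) / N)) := by
    rw [hexp]; exact hkey
  calc ‖fnext‖ ≤ (1 + η) * ‖fm - l • φ‖ := hnext
    _ ≤ (1 + η) * (N * (1 + δ + 2 * ρ - l * t * A⁻¹ * (1 - δ - (εm + ε) / N))) :=
        mul_le_mul_of_nonneg_left hfin hη0
    _ = N * (1 + η) * (1 + δ + 2 * ρ - l * t * A⁻¹ * (1 - δ - (εm + ε) / N)) := by ring
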